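/- Let ⃗e = (e_1 ≤ … ≤ e_k) be a splitting sequence and fix an index range: suppose there exist indices i and k' ≥ 2 with i−1+k' ≤ k such that e_i = … = e_{i−1+k'} = a. For 1 ≤ l ≤ ⌊k'/2⌋ define ⃗e' by e'_j = a−1 for i ≤ j ≤ i+l−1, e'_j = a+1 for i+k'−l ≤ j ≤ i−1+k', and e'_j = e_j otherwise. Then u(⃗e') − u(⃗e) = l², where u(⃗e) = Σ_{1 ≤ i < j ≤ k} max{0, e_j − e_i − 1}. -/
import Mathlib


/-- The invariant `u(⃗e) = ∑_{1 ≤ i < j ≤ k} max {0, e_j - e_i - 1}` of a splitting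
sequence, indexed over positions `1, …, k`. -/
def uInv (k : ℕ) (e : ℕ → ℤ) : ℤ :=
  ∑ i ∈ Finset.Icc 1 k, ∑ j ∈ Finset.Icc 1 k, if i < j then max 0 (e j - e i - 1) else 0

set_option maxHeartbeats 2000000 in
private lemma stmt5_key (k i₀ k' l i j : ℕ) (a ei ej ei' ej' : ℤ)
    (hi₀ : 1 ≤ i₀) (hk' : 2 ≤ k') (hl : 1 ≤ l) (hl2 : 2 * l ≤ k')
    (hvi : (1 ≤ i ∧ i ≤ i₀ - 1 ∧ ei ≤ a - 2) ∨
        (i₀ ≤ i ∧ i ≤ i₀ - 1 + k' ∧ ei = a) ∨ (i₀ + k' ≤ i ∧ i ≤ k ∧ a + 2 ≤ ei))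
    (hvj : (1 ≤ j ∧ j ≤ i₀ - 1 ∧ ej ≤ a - 2) ∨
        (i₀ ≤ j ∧ j ≤ i₀ - 1 + k' ∧ ej = a) ∨ (i₀ + k' ≤ j ∧ j ≤ k ∧ a + 2 ≤ ej))
    (hei' : ei' = if i₀ ≤ i ∧ i ≤ i₀ + l - 1 then a - 1
      else if i₀ + k' - l ≤ i ∧ i ≤ i₀ - 1 + k' then a + 1 else ei)
    (hej' : ej' = if i₀ ≤ j ∧ j ≤ i₀ + l - 1 then a - 1
      else if i₀ + k' - l ≤ j ∧ j ≤ i₀ - 1 + k' then a + 1 else ej) :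
    (if i < j then max 0 (ej' - ei' - 1) else 0) -
        (if i < j then max 0 (ej - ei - 1) else 0)
      = (if i₀ ≤ i ∧ i ≤ i₀ + l - 1 then (1:ℤ) else 0) *
          (if i₀ + k' - l ≤ j ∧ j ≤ i₀ - 1 + k' then (1:ℤ) else 0)
        - (if 1 ≤ i ∧ i ≤ i₀ - 1 then (1:ℤ) else 0) *
          (if i₀ ≤ j ∧ j ≤ i₀ + l - 1 then (1:ℤ) else 0)
        + (if 1 ≤ i ∧ i ≤ i₀ - 1 then (1:ℤ) else 0) *
          (if i₀ + k' - l ≤ j ∧ j ≤ i₀ - 1 + k' then (1:ℤ) else 0)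
        + (if i₀ ≤ i ∧ i ≤ i₀ + l - 1 then (1:ℤ) else 0) *
          (if i₀ + k' ≤ j ∧ j ≤ k then (1:ℤ) else 0)
        - (if i₀ + k' - l ≤ i ∧ i ≤ i₀ - 1 + k' then (1:ℤ) else 0) *
          (if i₀ + k' ≤ j ∧ j ≤ k then (1:ℤ) else 0) := by
  split_ifs at * <;> omega

/-- Let `⃗e` be a nondecreasing splitting sequence with a constant block
`e_i = ⋯ = e_{i-1+k'} = a` (with `e_{i-1} < a - 1` and `e_{i+k'} > a + 1` at the boundary).
For `1 ≤ l ≤ ⌊k'/2⌋` let `⃗e'` lower the first `l` entries of the block to `a - 1` and raise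
the last `l` entries to `a + 1`.  Then `u(⃗e') - u(⃗e) = l²`. -/

theorem stmt5 (k i₀ k' l : ℕ) (a : ℤ) (e e' : ℕ → ℤ)
    (hmono : ∀ i j, 1 ≤ i → i ≤ j → j ≤ k → e i ≤ e j)
    (hi₀ : 1 ≤ i₀) (hk' : 2 ≤ k') (hik : i₀ - 1 + k' ≤ k)
    (hblock : ∀ j, i₀ ≤ j → j ≤ i₀ - 1 + k' → e j = a)
    (hleft : 1 < i₀ → e (i₀ - 1) < a - 1)
    (hright : i₀ + k' ≤ k → a + 1 < e (i₀ + k'))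
    (hl : 1 ≤ l) (hl2 : 2 * l ≤ k')
    (he' : ∀ j, e' j =
      if i₀ ≤ j ∧ j ≤ i₀ + l - 1 then a - 1
      else if i₀ + k' - l ≤ j ∧ j ≤ i₀ - 1 + k' then a + 1
      else e j) :
    uInv k e' - uInv k e = (l : ℤ) ^ 2 := by
  have hLa : ∀ x, 1 ≤ x → x ≤ i₀ - 1 → e x ≤ a - 2 := by
    intro x hx1 hx2
    have h1 : e x ≤ e (i₀ - 1) := hmono x (i₀ - 1) hx1 (by omega) (by omega)
    have h2 := hleft (by omega)
    omega
  have hRa : ∀ x, i₀ + k' ≤ x → x ≤ k → a + 2 ≤ e x := by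
    intro x hx1 hx2
    have h1 : e (i₀ + k') ≤ e x := hmono _ x (by omega) hx1 hx2
    have h2 := hright (by omega)
    omega
  have hreg : ∀ x, 1 ≤ x → x ≤ k → (1 ≤ x ∧ x ≤ i₀ - 1 ∧ e x ≤ a - 2) ∨
      (i₀ ≤ x ∧ x ≤ i₀ - 1 + k' ∧ e x = a) ∨
      (i₀ + k' ≤ x ∧ x ≤ k ∧ a + 2 ≤ e x) := by
    intro x hx1 hx2
    rcases Nat.lt_or_ge x i₀ with h | h
    · exact Or.inl ⟨hx1, by omega, hLa x hx1 (by omega)⟩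
    rcases Nat.lt_or_ge x (i₀ + k') with h2 | h2
    · exact Or.inr (Or.inl ⟨h, by omega, hblock x h (by omega)⟩)
    · exact Or.inr (Or.inr ⟨h2, hx2, hRa x h2 hx2⟩)
  set S := Finset.Icc 1 k with hS
  have hdiff : uInv k e' - uInv k e = ∑ i ∈ S, ∑ j ∈ S,
      ((if i₀ ≤ i ∧ i ≤ i₀ + l - 1 then (1:ℤ) else 0) *
          (if i₀ + k' - l ≤ j ∧ j ≤ i₀ - 1 + k' then (1:ℤ) else 0)
        - (if 1 ≤ i ∧ i ≤ i₀ - 1 then (1:ℤ) else 0) *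
          (if i₀ ≤ j ∧ j ≤ i₀ + l - 1 then (1:ℤ) else 0)
        + (if 1 ≤ i ∧ i ≤ i₀ - 1 then (1:ℤ) else 0) *
          (if i₀ + k' - l ≤ j ∧ j ≤ i₀ - 1 + k' then (1:ℤ) else 0)
        + (if i₀ ≤ i ∧ i ≤ i₀ + l - 1 then (1:ℤ) else 0) *
          (if i₀ + k' ≤ j ∧ j ≤ k then (1:ℤ) else 0)
        - (if i₀ + k' - l ≤ i ∧ i ≤ i₀ - 1 + k' then (1:ℤ) else 0) *
          (if i₀ + k' ≤ j ∧ j ≤ k then (1:ℤ) else 0)) := by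
    unfold uInv
    rw [← Finset.sum_sub_distrib]
    refine Finset.sum_congr rfl fun i hi => ?_
    rw [← Finset.sum_sub_distrib]
    refine Finset.sum_congr rfl fun j hj => ?_
    simp only [hS, Finset.mem_Icc] at hi hj
    exact stmt5_key k i₀ k' l i j a (e i) (e j) (e' i) (e' j) hi₀ hk' hl hl2
      (hreg i hi.1 hi.2) (hreg j hj.1 hj.2) (he' i) (he' j)
  have count : ∀ α β : ℕ, (∑ x ∈ S, if α ≤ x ∧ x ≤ β then (1:ℤ) else 0)
      = ((min k β + 1 - max 1 α : ℕ) : ℤ) := by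
    intro α β
    rw [show (∑ x ∈ S, if α ≤ x ∧ x ≤ β then (1:ℤ) else 0)
        = ((S.filter (fun x => α ≤ x ∧ x ≤ β)).card : ℤ) from by
      simp [Finset.sum_ite, Finset.sum_const]]
    have h2 : S.filter (fun x => α ≤ x ∧ x ≤ β) = Finset.Icc (max 1 α) (min k β) := by
      ext x
      simp only [hS, Finset.mem_filter, Finset.mem_Icc]
      omega
    rw [h2, Nat.card_Icc]
  rw [hdiff]
  simp only [Finset.sum_sub_distrib, Finset.sum_add_distrib, ← Finset.sum_mul,
    ← Finset.mul_sum]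
  simp only [count]
  have c1 : (min k (i₀ + l - 1) + 1 - max 1 i₀ : ℕ) = l := by omega
  have c2 : (min k (i₀ - 1 + k') + 1 - max 1 (i₀ + k' - l) : ℕ) = l := by omega
  have c3 : (min k (i₀ - 1) + 1 - max 1 1 : ℕ) = i₀ - 1 := by omega
  have c4 : (min k k + 1 - max 1 (i₀ + k') : ℕ) = k + 1 - (i₀ + k') := by omega
  rw [c1, c2, c3, c4]
  ring
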